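/- Let H be a directed graph with a root vertex r such that for every terminal t in a set T, H contains k edge-disjoint r→t paths, and suppose H is edge-minimal with this property (removing any edge destroys it). Then for every vertex v of H, the maximum number of edge-disjoint r→v paths in H is at most k. -/

import Mathlib

open scoped Classical

/-- The list of directed edges traversed by a list of vertices. -/
def pathEdges {V : Type*} (p : List V) : List (V × V) := p.zip p.tail

/-- `p` is a simple directed path in the edge set `E` starting at `s`. -/
def IsRPath {V : Type*} (E : Finset (V × V)) (s : V) (p : List V) : Prop :=
  p.Nodup ∧ p.Chain' (fun u v => (u, v) ∈ E) ∧ p.head? = some s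

/-- `p` is a simple directed path in `E` from `s` to `t`. -/
def IsRPathTo {V : Type*} (E : Finset (V × V)) (s t : V) (p : List V) : Prop :=
  IsRPath E s p ∧ p.getLast? = some t

/-- `E` contains `k` pairwise edge-disjoint directed `s`→`t` paths. -/
def HasKPaths {V : Type*} (E : Finset (V × V)) (s t : V) (k : ℕ) : Prop :=
  ∃ P : Fin k → List V, (∀ i, IsRPathTo E s t (P i)) ∧
    ∀ i j, i ≠ j → ∀ e, e ∈ pathEdges (P i) → e ∉ pathEdges (P j)

section Aux
variable {V : Type*}

lemma pathEdges_cons_cons (a b : V) (l : List V) :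
    pathEdges (a :: b :: l) = (a, b) :: pathEdges (b :: l) := rfl

lemma chain'_iff_pathEdges (S : V × V → Prop) :
    ∀ (p : List V), p.Chain' (fun a b => S (a, b)) ↔ ∀ e ∈ pathEdges p, S e := by
  intro p
  induction p with
  | nil => simp [pathEdges, List.Chain']
  | cons a l ih =>
    cases l with
    | nil => simp [pathEdges, List.Chain']
    | cons b m =>
      rw [show List.Chain' (fun a b => S (a, b)) (a :: b :: m) ↔
          S (a, b) ∧ List.Chain' (fun a b => S (a, b)) (b :: m) from List.isChain_cons_cons,
        pathEdges_cons_cons, ih]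
      constructor
      · rintro ⟨h1, h2⟩ e he
        rcases List.mem_cons.1 he with rfl | he
        · exact h1
        · exact h2 e he
      · intro h
        exact ⟨h _ List.mem_cons_self, fun e he => h e (List.mem_cons_of_mem _ he)⟩

lemma mem_fst_of_mem_pathEdges {e : V × V} {p : List V} (h : e ∈ pathEdges p) : e.1 ∈ p :=
  (List.of_mem_zip (by simpa [pathEdges] using h)).1

lemma mem_snd_of_mem_pathEdges {e : V × V} {p : List V} (h : e ∈ pathEdges p) : e.2 ∈ p :=
  List.mem_of_mem_tail (List.of_mem_zip (a := e.1) (b := e.2) (by simpa [pathEdges] using h)).2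

lemma zip_drop (n : ℕ) : ∀ (l l' : List V), (l.drop n).zip (l'.drop n) = (l.zip l').drop n := by
  induction n with
  | zero => simp
  | succ k ih =>
    intro l l'
    cases l with
    | nil => simp
    | cons a m =>
      cases l' with
      | nil => simp
      | cons b m' =>
        simpa using ih m m'

lemma pathEdges_drop (n : ℕ) (p : List V) :
    pathEdges (p.drop n) = (pathEdges p).drop n := by
  unfold pathEdges
  rw [List.tail_drop, show p.drop (n+1) = p.tail.drop n by
    cases p <;> simp [List.drop_succ_cons]]
  exact zip_drop n p p.tail

-- subset lemma
lemma pathEdges_subset {E : Finset (V × V)} {p : List V}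
    (h : p.Chain' (fun u v => (u, v) ∈ E)) : ∀ e ∈ pathEdges p, e ∈ E := by
  intro e he
  exact (chain'_iff_pathEdges (fun e => e ∈ E) p).1 h e he

def Reach (E : Finset (V × V)) (s x : V) : Prop := ∃ p, IsRPathTo E s x p

lemma reach_self (E : Finset (V × V)) (s : V) : Reach E s s :=
  ⟨[s], ⟨⟨List.nodup_singleton s, List.isChain_singleton s, rfl⟩, rfl⟩⟩

lemma isRPathTo_mono {E E' : Finset (V × V)} (h : E ⊆ E') {s t : V} {p : List V}
    (hp : IsRPathTo E s t p) : IsRPathTo E' s t p :=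
  ⟨⟨hp.1.1, hp.1.2.1.imp (fun a b hab => h hab), hp.1.2.2⟩, hp.2⟩

lemma reach_step [DecidableEq V] {E : Finset (V × V)} {s x y : V}
    (h : Reach E s x) (hxy : (x, y) ∈ E) : Reach E s y := by
  obtain ⟨p, ⟨⟨hnd, hch, hhd⟩, hlast⟩⟩ := h
  by_cases hy : y ∈ p
  · -- take prefix up to y
    obtain ⟨i, hi, rfl⟩ := List.mem_iff_getElem.1 hy
    refine ⟨p.take (i+1), ⟨⟨hnd.sublist (List.take_sublist _ _),
      hch.prefix (List.take_prefix _ _), ?_⟩, ?_⟩⟩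
    · cases p with
      | nil => simp at hi
      | cons a l => simpa using hhd
    · rw [List.getLast?_eq_getElem?]
      have hlen : (p.take (i+1)).length = i + 1 := by
        rw [List.length_take]; omega
      rw [hlen]
      simp [List.getElem?_take, Nat.lt_succ_self, List.getElem?_eq_getElem hi]
  · -- append y
    have hne : p ≠ [] := by rintro rfl; simp at hhd
    refine ⟨p ++ [y], ⟨⟨?_, ?_, ?_⟩, ?_⟩⟩
    · simpa [List.nodup_append] using ⟨hnd, fun a ha h => hy (h ▸ ha)⟩
    · refine List.IsChain.append hch (List.isChain_singleton y) ?_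
      intro a ha b hb
      rw [hlast] at ha
      simp at hb
      cases ha; cases hb
      exact hxy
    · rw [List.head?_append_of_ne_nil _ hne]; exact hhd
    · simp

lemma reach_of_walk [DecidableEq V] {E : Finset (V × V)} {s : V} :
    ∀ (l : List V) {x z : V}, Reach E s x → l.Chain' (fun a b => (a, b) ∈ E) →
      l.head? = some x → l.getLast? = some z → Reach E s z := by
  intro l
  induction l with
  | nil => intro x z _ _ h; simp at h
  | cons a m ih =>
    intro x z hrx hch hhd hlast
    cases hhd
    cases m with
    | nil => cases hlast; exact hrx
    | cons b m' =>
      replace hch := List.isChain_cons_cons.1 hch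
      exact ih (reach_step hrx hch.1) hch.2 rfl (by simpa using hlast)

lemma reach_trans [DecidableEq V] {E : Finset (V × V)} {s x z : V}
    (h : Reach E s x) {p : List V} (hp : IsRPathTo E x z p) : Reach E s z :=
  reach_of_walk p h hp.1.2.1 hp.1.2.2 hp.2

/-- existence of a last edge entering `t`. -/
lemma exists_last_edge {E : Finset (V × V)} {s t : V} {p : List V}
    (hp : IsRPathTo E s t p) (hst : s ≠ t) : ∃ u, (u, t) ∈ pathEdges p := by
  obtain ⟨⟨hnd, hch, hhd⟩, hlast⟩ := hp
  have hne : p ≠ [] := by rintro rfl; simp at hhd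
  have hlen : 2 ≤ p.length := by
    rcases p with _ | ⟨a, _ | ⟨b, m⟩⟩
    · simp at hhd
    · simp only [List.head?_cons, Option.some.injEq] at hhd
      simp only [List.getLast?_singleton, Option.some.injEq] at hlast
      exact absurd (hhd.symm.trans hlast) hst
    · simp
  have h1 : p.length - 1 < p.length := by omega
  have h2 : p.length - 2 < p.length := by omega
  refine ⟨p[p.length - 2], ?_⟩
  have ht : p[p.length - 1] = t := by
    rw [List.getLast?_eq_getElem?] at hlast
    simpa [List.getElem?_eq_getElem h1] using hlast
  have hzlen : (p.zip p.tail).length = p.length - 1 := by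
    simp [List.length_zip, List.length_tail]
  have hidx : p.length - 2 < (p.zip p.tail).length := by omega
  have htl : p.length - 2 < p.tail.length := by simp [List.length_tail]; omega
  have : (p.zip p.tail)[p.length - 2]'hidx = (p[p.length-2]'h2, p.tail[p.length-2]'htl) :=
    List.getElem_zip
  have htail : p.tail[p.length - 2]'(by simp [List.length_tail]; omega) = p[p.length - 1] := by
    rw [List.getElem_tail]
    congr 1
    omega
  rw [← ht, ← htail]
  rw [show pathEdges p = p.zip p.tail from rfl, ← this]
  exact List.getElem_mem _

lemma path_suffix {E : Finset (V × V)} {s t u v : V} {p : List V}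
    (hp : IsRPathTo E s t p) (huv : (u, v) ∈ pathEdges p) :
    ∃ q, IsRPathTo E v t q ∧ (∀ e ∈ pathEdges q, e ∈ pathEdges p) ∧ (u, v) ∉ pathEdges q := by
  obtain ⟨⟨hnd, hch, hhd⟩, hlast⟩ := hp
  obtain ⟨i, hi, hieq⟩ := List.mem_iff_getElem.1 huv
  have hzlen : (pathEdges p).length = p.length - 1 := by
    simp [pathEdges, List.length_zip, List.length_tail]
  have hip : i + 1 < p.length := by rw [hzlen] at hi; omega
  have htl : i < p.tail.length := by simp [List.length_tail]; omega
  have hzi : (pathEdges p)[i]'hi = (p[i]'(by omega), p.tail[i]'htl) := List.getElem_zip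
  have hu : p[i]'(by omega) = u := by rw [hieq] at hzi; exact (Prod.mk.injEq _ _ _ _ ▸ hzi.symm).1
  have hv : p[i+1]'hip = v := by
    have : p.tail[i]'htl = v := by rw [hieq] at hzi; exact (Prod.mk.injEq _ _ _ _ ▸ hzi.symm).2
    rw [← this, List.getElem_tail]
  set q := p.drop (i+1) with hq
  have hqe : pathEdges q = (pathEdges p).drop (i+1) := pathEdges_drop _ _
  have hsub : ∀ e ∈ pathEdges q, e ∈ pathEdges p := by
    intro e he; rw [hqe] at he; exact List.mem_of_mem_drop he
  have hqlen : q.length = p.length - (i+1) := by simp [hq]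
  refine ⟨q, ⟨⟨⟨hnd.sublist (List.drop_sublist _ _), ?_, ?_⟩, ?_⟩, ?_, ?_⟩⟩
  · rw [chain'_iff_pathEdges]
    intro e he
    exact pathEdges_subset hch e (hsub e he)
  · rw [hq, List.head?_drop, List.getElem?_eq_getElem hip, hv]
  · -- getLast? q = some t
    rw [List.getLast?_eq_getElem?, hqlen, hq, List.getElem?_drop]
    rw [List.getLast?_eq_getElem?] at hlast
    rw [show i + 1 + (p.length - (i+1) - 1) = p.length - 1 by omega]
    exact hlast
  · exact hsub
  · intro hmem
    have humem : u ∈ q := mem_fst_of_mem_pathEdges hmem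
    have hutake : u ∈ p.take (i+1) := by
      rw [← hu]
      have : (p.take (i+1))[i]'(by rw [List.length_take]; omega) = p[i]'(by omega) :=
        List.getElem_take
      rw [← this]; exact List.getElem_mem _
    have hnd2 : (p.take (i+1) ++ p.drop (i+1)).Nodup := by
      rw [List.take_append_drop]; exact hnd
    exact (List.disjoint_of_nodup_append hnd2) hutake humem

lemma mem_of_getLast?' {l : List V} {b : V} (h : l.getLast? = some b) : b ∈ l := by
  obtain ⟨h1, h2⟩ := List.mem_getLast?_eq_getLast (show b ∈ l.getLast? by simp [h])
  exact h2 ▸ List.getLast_mem h1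

lemma mem_of_head?' {l : List V} {b : V} (h : l.head? = some b) : b ∈ l :=
  List.mem_of_mem_head? (by simp [h])

section Flow
variable [DecidableEq V] [Fintype V]

def outd (F : Finset (V × V)) (x : V) : ℕ := (F.filter (fun e => e.1 = x)).card
def ind (F : Finset (V × V)) (x : V) : ℕ := (F.filter (fun e => e.2 = x)).card
def exc (F : Finset (V × V)) (x : V) : ℤ := (outd F x : ℤ) - ind F x

lemma exc_union {F G : Finset (V × V)} (h : Disjoint F G) (x : V) :
    exc (F ∪ G) x = exc F x + exc G x := by
  unfold exc outd ind
  rw [Finset.filter_union, Finset.filter_union,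
    Finset.card_union_of_disjoint (Finset.disjoint_filter_filter h),
    Finset.card_union_of_disjoint (Finset.disjoint_filter_filter h)]
  push_cast; ring

lemma exc_sdiff {F D : Finset (V × V)} (h : D ⊆ F) (x : V) :
    exc (F \ D) x = exc F x - exc D x := by
  have h1 : exc (F \ D ∪ D) x = exc (F \ D) x + exc D x :=
    exc_union Finset.sdiff_disjoint x
  rw [Finset.sdiff_union_of_subset h] at h1
  omega

lemma exc_swap (F : Finset (V × V)) (x : V) :
    exc (F.image Prod.swap) x = - exc F x := by
  unfold exc outd ind
  rw [Finset.filter_image, Finset.filter_image,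
    Finset.card_image_of_injective _ Prod.swap_injective,
    Finset.card_image_of_injective _ Prod.swap_injective]
  simp only [Prod.fst_swap, Prod.snd_swap]
  ring

lemma pathEdges_nodup {p : List V} (h : p.Nodup) : (pathEdges p).Nodup := by
  induction p with
  | nil => simp [pathEdges]
  | cons a l ih =>
    cases l with
    | nil => simp [pathEdges]
    | cons b m =>
      rw [pathEdges_cons_cons]
      refine List.nodup_cons.2 ⟨?_, ih (List.nodup_cons.1 h).2⟩
      intro hmem
      exact (List.nodup_cons.1 h).1 (mem_fst_of_mem_pathEdges hmem)

lemma degrees_pathEdges {p : List V} (hnd : p.Nodup) {a b : V}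
    (hhd : p.head? = some a) (hlast : p.getLast? = some b) (x : V) :
    outd (pathEdges p).toFinset x = (if x ∈ p ∧ x ≠ b then 1 else 0) ∧
    ind (pathEdges p).toFinset x = (if x ∈ p ∧ x ≠ a then 1 else 0) := by
  induction p generalizing a with
  | nil => simp at hhd
  | cons c rest ih =>
    cases hhd
    cases rest with
    | nil =>
      simp only [List.getLast?_singleton, Option.some.injEq] at hlast
      cases hlast
      unfold outd ind
      simp [pathEdges]
    | cons d m =>
      have hcd : c ∉ (d :: m) := (List.nodup_cons.1 hnd).1
      have hnd' : (d :: m).Nodup := (List.nodup_cons.1 hnd).2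
      rw [List.getLast?_cons_cons] at hlast
      have hbmem : b ∈ (d :: m) := mem_of_getLast?' hlast
      obtain ⟨ihout, ihind⟩ := ih hnd' rfl hlast
      have hnotmem : ((c, d) : V × V) ∉ pathEdges (d :: m) := by
        intro hc; exact hcd (mem_fst_of_mem_pathEdges hc)
      have htf : (pathEdges (c :: d :: m)).toFinset
          = insert (c, d) (pathEdges (d :: m)).toFinset := by
        rw [pathEdges_cons_cons]; simp
      constructor
      · unfold outd at ihout ⊢
        rw [htf, Finset.filter_insert]
        by_cases hxc : x = c
        · subst hxc
          rw [if_pos rfl, Finset.card_insert_of_notMem (by simp [hnotmem])]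
          have h0 : x ∉ (d :: m) := hcd
          rw [ihout, if_neg (by tauto)]
          have hxb : x ≠ b := fun h => hcd (h ▸ hbmem)
          simp [hxb]
        · rw [if_neg (by simpa using fun h : c = x => hxc h.symm), ihout]
          have : (x ∈ c :: d :: m ∧ x ≠ b) ↔ (x ∈ d :: m ∧ x ≠ b) := by
            constructor
            · rintro ⟨h1, h2⟩
              rcases List.mem_cons.1 h1 with rfl | h1
              · exact absurd rfl hxc
              · exact ⟨h1, h2⟩
            · rintro ⟨h1, h2⟩; exact ⟨List.mem_cons_of_mem _ h1, h2⟩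
          rw [if_congr this rfl rfl]
      · unfold ind at ihind ⊢
        rw [htf, Finset.filter_insert]
        have hdc : d ≠ c := fun h => hcd (h ▸ (List.mem_cons_self : d ∈ d :: m))
        by_cases hxd : x = d
        · subst hxd
          rw [if_pos rfl, Finset.card_insert_of_notMem (by simp [hnotmem])]
          rw [ihind, if_neg (by tauto)]
          simp [List.mem_cons_self, hdc]
        · rw [if_neg (by simpa using fun h : d = x => hxd h.symm), ihind]
          by_cases hxc : x = c
          · subst hxc
            rw [if_neg (by tauto), if_neg (by tauto)]
          · have : (x ∈ d :: m ∧ x ≠ d) ↔ x ∈ d :: m := by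
              constructor
              · exact fun h => h.1
              · intro h
                exact ⟨h, hxd⟩
            rw [if_congr this rfl rfl]
            have : (x ∈ d :: m) ↔ (x ∈ c :: d :: m ∧ x ≠ c) := by
              constructor
              · exact fun h => ⟨List.mem_cons_of_mem _ h, hxc⟩
              · rintro ⟨h1, _⟩
                rcases List.mem_cons.1 h1 with rfl | h1
                · exact absurd rfl hxc
                · exact h1
            rw [if_congr this rfl rfl]

lemma exc_pathEdges {p : List V} (hnd : p.Nodup) {a b : V} (hab : a ≠ b)
    (hhd : p.head? = some a) (hlast : p.getLast? = some b) (x : V) :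
    exc (pathEdges p).toFinset x =
      (if x = a then 1 else 0) - (if x = b then 1 else 0) := by
  obtain ⟨ho, hi⟩ := degrees_pathEdges hnd hhd hlast x
  have hamem : a ∈ p := mem_of_head?' hhd
  have hbmem : b ∈ p := mem_of_getLast?' hlast
  unfold exc
  rw [ho, hi]
  by_cases hxa : x = a
  · subst hxa
    rw [if_neg (fun h : x = b => hab h), if_pos (⟨hamem, hab⟩ : x ∈ p ∧ x ≠ b),
      if_neg (by tauto : ¬(x ∈ p ∧ x ≠ x)), if_pos rfl]
    norm_num
  · by_cases hxb : x = b
    · subst hxb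
      rw [if_neg (by tauto : ¬(x ∈ p ∧ x ≠ x)), if_pos (⟨hbmem, fun h => hab h.symm⟩ : x ∈ p ∧ x ≠ a),
        if_neg hxa, if_pos rfl]
      norm_num
    · rw [if_neg hxa, if_neg hxb]
      by_cases hxp : x ∈ p <;> simp [hxp, hxa, hxb]

lemma sum_outd (F : Finset (V × V)) (S : Finset V) :
    ∑ x ∈ S, outd F x = (F.filter (fun e => e.1 ∈ S)).card := by
  rw [Finset.card_eq_sum_card_fiberwise (f := Prod.fst) (s := F.filter (fun e => e.1 ∈ S)) (t := S)
    (fun e he => (Finset.mem_filter.1 he).2)]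
  apply Finset.sum_congr rfl
  intro x hx
  unfold outd
  rw [Finset.filter_filter]
  congr 1
  apply Finset.filter_congr
  intro e _
  constructor
  · rintro rfl; exact ⟨hx, rfl⟩
  · rintro ⟨_, rfl⟩; rfl

lemma sum_ind (F : Finset (V × V)) (S : Finset V) :
    ∑ x ∈ S, ind F x = (F.filter (fun e => e.2 ∈ S)).card := by
  rw [Finset.card_eq_sum_card_fiberwise (f := Prod.snd) (s := F.filter (fun e => e.2 ∈ S)) (t := S)
    (fun e he => (Finset.mem_filter.1 he).2)]
  apply Finset.sum_congr rfl
  intro x hx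
  unfold ind
  rw [Finset.filter_filter]
  congr 1
  apply Finset.filter_congr
  intro e _
  constructor
  · rintro rfl; exact ⟨hx, rfl⟩
  · rintro ⟨_, rfl⟩; rfl

lemma card_filter_split (F : Finset (V × V)) (p q : V × V → Prop)
    [DecidablePred p] [DecidablePred q] :
    (F.filter p).card = (F.filter (fun e => p e ∧ q e)).card
      + (F.filter (fun e => p e ∧ ¬ q e)).card := by
  rw [← Finset.filter_filter, ← Finset.filter_filter,
    Finset.card_filter_add_card_filter_not]

lemma sum_exc (F : Finset (V × V)) (S : Finset V) :
    ∑ x ∈ S, exc F x = ((F.filter (fun e => e.1 ∈ S ∧ e.2 ∉ S)).card : ℤ)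
      - (F.filter (fun e => e.1 ∉ S ∧ e.2 ∈ S)).card := by
  unfold exc
  rw [Finset.sum_sub_distrib, ← Nat.cast_sum, ← Nat.cast_sum, sum_outd, sum_ind]
  have e1 : (F.filter (fun e => e.1 ∈ S)).card
      = (F.filter (fun e => e.1 ∈ S ∧ e.2 ∈ S)).card
        + (F.filter (fun e => e.1 ∈ S ∧ e.2 ∉ S)).card := card_filter_split F _ _
  have e2 : (F.filter (fun e => e.2 ∈ S)).card
      = (F.filter (fun e => e.2 ∈ S ∧ e.1 ∈ S)).card
        + (F.filter (fun e => e.2 ∈ S ∧ e.1 ∉ S)).card := card_filter_split F _ _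
  have e3 : (F.filter (fun e => e.1 ∈ S ∧ e.2 ∈ S)).card
      = (F.filter (fun e => e.2 ∈ S ∧ e.1 ∈ S)).card := by
    congr 1
    apply Finset.filter_congr; intro e _; constructor <;> exact fun h => ⟨h.2, h.1⟩
  have e4 : (F.filter (fun e => e.2 ∈ S ∧ ¬ e.1 ∈ S)).card
      = (F.filter (fun e => e.1 ∉ S ∧ e.2 ∈ S)).card := by
    congr 1
    apply Finset.filter_congr; intro e _; constructor <;> exact fun h => ⟨h.2, h.1⟩
  have e5 : (F.filter (fun e => e.1 ∈ S ∧ ¬ e.2 ∈ S)).card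
      = (F.filter (fun e => e.1 ∈ S ∧ e.2 ∉ S)).card := rfl
  rw [e1, e2, e3, e4]
  push_cast
  ring

def IsFlow (F : Finset (V × V)) (r t : V) (j : ℕ) : Prop :=
  exc F r = j ∧ exc F t = -(j : ℤ) ∧ ∀ x, x ≠ r → x ≠ t → exc F x = 0

lemma reach_of_flow {F : Finset (V × V)} {r t : V} {j : ℕ} (hrt : r ≠ t)
    (hF : IsFlow F r t j) (hj : 1 ≤ j) : Reach F r t := by
  by_contra ht
  set S : Finset V := Finset.univ.filter (fun x => Reach F r x) with hS
  have hrS : r ∈ S := by simp [hS, reach_self]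
  have htS : t ∉ S := by simp [hS]; exact ht
  have hsum : ∑ x ∈ S, exc F x = exc F r := by
    apply Finset.sum_eq_single_of_mem r hrS
    intro x hxS hxr
    exact hF.2.2 x hxr (fun h => htS (h ▸ hxS))
  have hclosed : F.filter (fun e => e.1 ∈ S ∧ e.2 ∉ S) = ∅ := by
    rw [Finset.filter_eq_empty_iff]
    rintro ⟨a, c⟩ hmem ⟨h1, h2⟩
    simp [hS] at h1 h2
    exact h2 (reach_step h1 hmem)
  have := sum_exc F S
  rw [hsum, hclosed, hF.1] at this
  simp at this
  omega

lemma isFlow_pathEdges {p : List V} {r t : V} (hrt : r ≠ t) (hnd : p.Nodup)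
    (hhd : p.head? = some r) (hlast : p.getLast? = some t) :
    IsFlow (pathEdges p).toFinset r t 1 := by
  refine ⟨?_, ?_, ?_⟩
  · rw [exc_pathEdges hnd hrt hhd hlast r, if_pos rfl, if_neg hrt]; norm_num
  · rw [exc_pathEdges hnd hrt hhd hlast t, if_neg (fun h => hrt h.symm), if_pos rfl]; norm_num
  · intro x hxr hxt
    rw [exc_pathEdges hnd hrt hhd hlast x, if_neg hxr, if_neg hxt]; norm_num

lemma flow_decompose {r t : V} (hrt : r ≠ t) :
    ∀ (j : ℕ) (F : Finset (V × V)), IsFlow F r t j →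
      ∃ P : Fin j → List V, (∀ i, IsRPathTo F r t (P i)) ∧
        ∀ i i', i ≠ i' → ∀ e, e ∈ pathEdges (P i) → e ∉ pathEdges (P i') := by
  intro j
  induction j with
  | zero => exact fun F _ => ⟨fun i => i.elim0, fun i => i.elim0, fun i => i.elim0⟩
  | succ n ih =>
    intro F hF
    obtain ⟨p, hp⟩ := reach_of_flow hrt hF (Nat.succ_le_succ (Nat.zero_le n))
    obtain ⟨⟨hnd, hch, hhd⟩, hlast⟩ := hp
    set P : Finset (V × V) := (pathEdges p).toFinset with hP
    have hPF : P ⊆ F := by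
      intro e he
      exact pathEdges_subset hch e (by simpa [hP] using he)
    have hPflow : IsFlow P r t 1 := isFlow_pathEdges hrt hnd hhd hlast
    have hF' : IsFlow (F \ P) r t n := by
      refine ⟨?_, ?_, ?_⟩
      · rw [exc_sdiff hPF, hF.1, hPflow.1]; push_cast; ring
      · rw [exc_sdiff hPF, hF.2.1, hPflow.2.1]; push_cast; ring
      · intro x h1 h2
        rw [exc_sdiff hPF, hF.2.2 x h1 h2, hPflow.2.2 x h1 h2]; ring
    obtain ⟨Q, hQ, hQdisj⟩ := ih (F \ P) hF'
    refine ⟨Fin.cons p Q, ?_, ?_⟩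
    · intro i
      refine Fin.cases ?_ ?_ i
      · simpa using ⟨⟨hnd, hch, hhd⟩, hlast⟩
      · intro i'
        simp only [Fin.cons_succ]
        exact isRPathTo_mono (Finset.sdiff_subset) (hQ i')
    · have hQnotP : ∀ i' e, e ∈ pathEdges (Q i') → e ∉ pathEdges p := by
        intro i' e he hep
        have h1 : e ∈ F \ P := pathEdges_subset (hQ i').1.2.1 e he
        exact (Finset.mem_sdiff.1 h1).2 (by simpa [hP] using hep)
      intro i i' hne
      rcases Fin.eq_zero_or_eq_succ i with rfl | ⟨a, rfl⟩ <;>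
        rcases Fin.eq_zero_or_eq_succ i' with rfl | ⟨b, rfl⟩
      · exact absurd rfl hne
      · simp only [Fin.cons_zero, Fin.cons_succ]
        intro e hep heq
        exact hQnotP b e heq hep
      · simp only [Fin.cons_zero, Fin.cons_succ]
        intro e heq hep
        exact hQnotP a e heq hep
      · simp only [Fin.cons_succ]
        exact hQdisj a b (fun h => hne (by rw [h]))

end Flow

lemma walk_closure {S : Finset (V × V)} {Q : V → Prop}
    (hstep : ∀ a b, (a, b) ∈ S → Q a → Q b) :
    ∀ (l : List V) {x z : V}, l.Chain' (fun a b => (a, b) ∈ S) →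
      l.head? = some x → Q x → l.getLast? = some z → Q z := by
  intro l
  induction l with
  | nil => intro x z _ h; simp at h
  | cons a m ih =>
    intro x z hch hhd hQ hlast
    cases hhd
    cases m with
    | nil => cases hlast; exact hQ
    | cons b m' =>
      replace hch := List.isChain_cons_cons.1 hch
      exact ih hch.2 rfl (hstep _ _ hch.1 hQ) (by simpa using hlast)

section Menger
variable [DecidableEq V] [Fintype V]

lemma hasKPaths_mono {E : Finset (V × V)} {r t : V} {j k : ℕ}
    (h : HasKPaths E r t j) (hk : k ≤ j) : HasKPaths E r t k := by
  obtain ⟨P, h1, h2⟩ := h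
  exact ⟨fun i => P (Fin.castLE hk i), fun i => h1 _,
    fun i i' hne e he => h2 _ _ (fun hh => hne (by
      have := Fin.castLE_injective hk hh
      exact this)) e he⟩

lemma menger {E : Finset (V × V)} {r t : V} (hrt : r ≠ t) {k : ℕ}
    (h : ¬ HasKPaths E r t k) :
    ∃ C : Finset (V × V), C ⊆ E ∧ C.card < k ∧ ¬ Reach (E \ C) r t := by
  classical
  set Pn : ℕ → Prop := fun j => ∃ F, F ⊆ E ∧ IsFlow F r t j with hPn
  have hP0 : Pn 0 := ⟨∅, by simp, by refine ⟨?_, ?_, ?_⟩ <;> simp [exc, outd, ind]⟩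
  have hbound : ∀ j, Pn j → j ≤ E.card := by
    rintro j ⟨F, hFE, hF⟩
    have h1 : (j : ℤ) = exc F r := hF.1.symm
    have h2 : exc F r ≤ outd F r := by unfold exc; omega
    have h3 : outd F r ≤ F.card := Finset.card_filter_le _ _
    have h4 : F.card ≤ E.card := Finset.card_le_card hFE
    omega
  set js := Nat.findGreatest Pn E.card with hjs
  have hPj : Pn js := Nat.findGreatest_spec (Nat.zero_le _) hP0
  have hnotsucc : ¬ Pn (js + 1) := fun hp =>
    Nat.findGreatest_is_greatest (Nat.lt_succ_self js) (hbound _ hp) hp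
  obtain ⟨F, hFE, hF⟩ := hPj
  have hjk : js < k := by
    by_contra hle
    push_neg at hle
    obtain ⟨P, hP1, hP2⟩ := flow_decompose hrt js F hF
    exact h (hasKPaths_mono ⟨P, fun i => isRPathTo_mono hFE (hP1 i), hP2⟩ hle)
  set Eres : Finset (V × V) := (E \ F) ∪ F.image Prod.swap with hEres
  have hswapF : ∀ e : V × V, e ∈ F → (e.2, e.1) ∈ Eres := by
    intro e he
    apply Finset.mem_union_right
    exact Finset.mem_image.2 ⟨e, he, rfl⟩
  have hEsub : ∀ e : V × V, e ∈ E → e ∉ F → e ∈ Eres := fun e h1 h2 =>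
    Finset.mem_union_left _ (Finset.mem_sdiff.2 ⟨h1, h2⟩)
  -- t is not residually reachable, else we could augment
  have hres : ¬ Reach Eres r t := by
    rintro ⟨p, ⟨⟨hnd, hch, hhd⟩, hlast⟩⟩
    apply hnotsucc
    set Pset : Finset (V × V) := (pathEdges p).toFinset with hPset
    have hPsub : ∀ e ∈ Pset, e ∈ Eres := by
      intro e he
      exact pathEdges_subset hch e (by simpa [hPset] using he)
    set A : Finset (V × V) := Pset.filter (fun e => e ∈ E \ F) with hA
    set B : Finset (V × V) := Pset.filter (fun e => e ∉ E \ F) with hB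
    set D : Finset (V × V) := B.image Prod.swap with hD
    have hDF : D ⊆ F := by
      intro e he
      obtain ⟨f, hf, rfl⟩ := Finset.mem_image.1 he
      have hf1 : f ∈ Pset := Finset.mem_filter.1 hf |>.1
      have hf2 : f ∉ E \ F := Finset.mem_filter.1 hf |>.2
      have := hPsub f hf1
      rw [hEres] at this
      rcases Finset.mem_union.1 this with h1 | h1
      · exact absurd h1 hf2
      · obtain ⟨g, hg, hge⟩ := Finset.mem_image.1 h1
        have : g = f.swap := by rw [← hge]; simp
        rw [← this] at *
        simpa using hg
    have hAF : ∀ e ∈ A, e ∉ F := fun e he =>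
      (Finset.mem_sdiff.1 (Finset.mem_filter.1 he).2).2
    have hAE : ∀ e ∈ A, e ∈ E := fun e he =>
      (Finset.mem_sdiff.1 (Finset.mem_filter.1 he).2).1
    set F' : Finset (V × V) := (F \ D) ∪ A with hF'
    have hdisj : Disjoint (F \ D) A := by
      rw [Finset.disjoint_right]
      intro e heA heFD
      exact hAF e heA (Finset.mem_sdiff.1 heFD).1
    have hdisjAB : Disjoint A B := by
      rw [Finset.disjoint_right]
      intro e heB heA
      exact (Finset.mem_filter.1 heB).2 (Finset.mem_filter.1 heA).2
    have hABP : A ∪ B = Pset := Finset.filter_union_filter_not_eq _ _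
    have hexc : ∀ x, exc F' x = exc F x + exc Pset x := by
      intro x
      have e1 : exc F' x = exc (F \ D) x + exc A x := exc_union hdisj x
      have e2 : exc (F \ D) x = exc F x - exc D x := exc_sdiff hDF x
      have e3 : exc D x = - exc B x := exc_swap B x
      have e4 : exc Pset x = exc A x + exc B x := by rw [← hABP]; exact exc_union hdisjAB x
      omega
    have hPflow : IsFlow Pset r t 1 := isFlow_pathEdges hrt hnd hhd hlast
    refine ⟨F', ?_, ?_, ?_, ?_⟩
    · intro e he
      rcases Finset.mem_union.1 he with h1 | h1
      · exact hFE (Finset.mem_sdiff.1 h1).1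
      · exact hAE e h1
    · rw [hexc r, hF.1, hPflow.1]; push_cast; ring
    · rw [hexc t, hF.2.1, hPflow.2.1]; push_cast; ring
    · intro x h1 h2
      rw [hexc x, hF.2.2 x h1 h2, hPflow.2.2 x h1 h2]; ring
  -- the cut
  set C : Finset (V × V) :=
    E.filter (fun e => Reach Eres r e.1 ∧ ¬ Reach Eres r e.2) with hC
  have hcut : ¬ Reach (E \ C) r t := by
    rintro ⟨p, ⟨⟨hnd, hch, hhd⟩, hlast⟩⟩
    apply hres
    refine walk_closure ?_ p hch hhd (reach_self _ _) hlast
    intro a b hab hQa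
    have h1 : (a, b) ∈ E := (Finset.mem_sdiff.1 hab).1
    have h2 : (a, b) ∉ C := (Finset.mem_sdiff.1 hab).2
    rw [hC, Finset.mem_filter] at h2
    by_contra hQb
    exact h2 ⟨h1, hQa, hQb⟩
  -- bound the cut size
  set SR : Finset V := Finset.univ.filter (fun x => Reach Eres r x) with hSR
  have hsum := sum_exc F SR
  have hzero : F.filter (fun e => e.1 ∉ SR ∧ e.2 ∈ SR) = ∅ := by
    rw [Finset.filter_eq_empty_iff]
    rintro e he ⟨h1, h2⟩
    rw [hSR, Finset.mem_filter] at h1 h2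
    exact h1 ⟨Finset.mem_univ _, reach_step (by tauto) (hswapF e he)⟩
  have hsum2 : ∑ x ∈ SR, exc F x = exc F r := by
    apply Finset.sum_eq_single_of_mem r (by simp [hSR, reach_self])
    intro x hxS hxr
    refine hF.2.2 x hxr (fun hxt => hres ?_)
    rw [hSR, Finset.mem_filter] at hxS
    exact hxt ▸ hxS.2
  have hCsub : C ⊆ F.filter (fun e => e.1 ∈ SR ∧ e.2 ∉ SR) := by
    intro e he
    rw [hC, Finset.mem_filter] at he
    obtain ⟨heE, hR1, hR2⟩ := he
    have heF : e ∈ F := by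
      by_contra heF
      exact hR2 (reach_step hR1 (by simpa using hEsub e heE heF))
    rw [Finset.mem_filter]
    refine ⟨heF, by simp [hSR, hR1], by simp [hSR, hR2]⟩
  have hCcard : C.card ≤ js := by
    have h1 : C.card ≤ (F.filter (fun e => e.1 ∈ SR ∧ e.2 ∉ SR)).card :=
      Finset.card_le_card hCsub
    rw [hsum2, hzero, hF.1] at hsum
    simp at hsum
    omega
  exact ⟨C, Finset.filter_subset _ _, by omega, hcut⟩

end Menger

lemma hasKPaths_self (E : Finset (V × V)) (r : V) (k : ℕ) : HasKPaths E r r k :=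
  ⟨fun _ => [r], fun _ => ⟨⟨List.nodup_singleton r, List.isChain_singleton r, rfl⟩, rfl⟩,
    fun i j _ e he => by simp [pathEdges] at he⟩

theorem kDST_aux
    {V : Type*} [Fintype V] [DecidableEq V]
    (E : Finset (V × V)) (r : V) (T : Finset V) (k : ℕ)
    (hfeas : ∀ t ∈ T, HasKPaths E r t k)
    (hmin : ∀ e ∈ E, ∃ t ∈ T, ¬ HasKPaths (E.erase e) r t k)
    (v : V) (hv : v ≠ r) (m : ℕ) (hm : HasKPaths E r v m) :
    m ≤ k := by
  classical
  rcases Nat.eq_zero_or_pos m with rfl | hmpos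
  · exact Nat.zero_le k
  obtain ⟨P, hP1, hP2⟩ := hm
  set i0 : Fin m := ⟨0, hmpos⟩ with hi0
  obtain ⟨u, hu⟩ := exists_last_edge (hP1 i0) (Ne.symm hv)
  set e : V × V := (u, v) with he
  have heE : e ∈ E := pathEdges_subset (hP1 i0).1.2.1 e hu
  obtain ⟨t, htT, hnk⟩ := hmin e heE
  have hrt : r ≠ t := by
    rintro rfl
    exact hnk (hasKPaths_self _ _ _)
  obtain ⟨C, hCsub, hCcard, hcut⟩ := menger hrt hnk
  set C' : Finset (V × V) := insert e C with hC'
  have heC : e ∉ C := fun h => Finset.notMem_erase e E (hCsub h)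
  have hC'card : C'.card ≤ k := by
    rw [hC', Finset.card_insert_of_notMem heC]
    omega
  set S : Finset (V × V) := E \ C' with hS
  have hSsub : S ⊆ (E.erase e) \ C := by
    intro f hf
    rw [hS, Finset.mem_sdiff, hC'] at hf
    obtain ⟨h1, h2⟩ := hf
    rw [Finset.mem_insert] at h2
    push_neg at h2
    exact Finset.mem_sdiff.2 ⟨Finset.mem_erase.2 ⟨h2.1, h1⟩, h2.2⟩
  have hcutS : ¬ Reach S r t := by
    rintro ⟨p, hp⟩
    exact hcut ⟨p, isRPathTo_mono hSsub hp⟩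
  -- every r→t path in E meets C'
  have hmeet : ∀ (W : List V) (a b : V), IsRPathTo E a b W →
      (¬ ∃ f ∈ pathEdges W, f ∈ C') → IsRPathTo S a b W := by
    intro W a b hW hno
    push_neg at hno
    refine ⟨⟨hW.1.1, ?_, hW.1.2.2⟩, hW.2⟩
    rw [chain'_iff_pathEdges]
    intro f hf
    rw [hS, Finset.mem_sdiff]
    exact ⟨pathEdges_subset hW.1.2.1 f hf, hno f hf⟩
  obtain ⟨Q, hQ1, hQ2⟩ := hfeas t htT
  have hQmeet : ∀ i : Fin k, ∃ f ∈ pathEdges (Q i), f ∈ C' := by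
    intro i
    by_contra hno
    exact hcutS ⟨Q i, hmeet _ _ _ (hQ1 i) hno⟩
  choose c hc1 hc2 using hQmeet
  have hcinj : Function.Injective c := by
    intro i j hij
    by_contra hne
    exact hQ2 i j hne (c i) (hc1 i) (hij ▸ hc1 j)
  have himg : Finset.univ.image c = C' := by
    apply Finset.eq_of_subset_of_card_le
    · intro f hf
      obtain ⟨i, _, rfl⟩ := Finset.mem_image.1 hf
      exact hc2 i
    · rw [Finset.card_image_of_injective _ hcinj, Finset.card_univ, Fintype.card_fin]
      exact hC'card
  have heimg : ∃ i : Fin k, c i = e := by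
    have : e ∈ Finset.univ.image c := by rw [himg]; exact Finset.mem_insert_self _ _
    obtain ⟨i, _, hi⟩ := Finset.mem_image.1 this
    exact ⟨i, hi⟩
  obtain ⟨ik, hik⟩ := heimg
  have hQonly : ∀ f ∈ pathEdges (Q ik), f ∈ C' → f = e := by
    intro f hf hfC
    by_contra hne
    have : f ∈ Finset.univ.image c := by rw [himg]; exact hfC
    obtain ⟨j, _, rfl⟩ := Finset.mem_image.1 this
    have hjik : ik ≠ j := fun hh => hne (by rw [← hik, hh])
    exact hQ2 ik j hjik _ hf (hc1 j)
  have heQ : e ∈ pathEdges (Q ik) := hik ▸ hc1 ik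
  obtain ⟨q, hq, hqsub, hqe⟩ := path_suffix (hQ1 ik) heQ
  have hqS : IsRPathTo S v t q := by
    apply hmeet _ _ _ hq
    rintro ⟨f, hf1, hf2⟩
    have := hQonly f (hqsub f hf1) hf2
    subst this
    exact hqe hf1
  -- each of the m paths meets C'
  have hPmeet : ∀ i : Fin m, ∃ f ∈ pathEdges (P i), f ∈ C' := by
    intro i
    by_contra hno
    have hreach : Reach S r v := ⟨P i, hmeet _ _ _ (hP1 i) hno⟩
    exact hcutS (reach_trans hreach hqS)
  choose d hd1 hd2 using hPmeet
  have hdinj : Function.Injective d := by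
    intro i j hij
    by_contra hne
    exact hP2 i j hne (d i) (hd1 i) (hij ▸ hd1 j)
  have : (Finset.univ.image d).card ≤ C'.card := by
    apply Finset.card_le_card
    intro f hf
    obtain ⟨i, _, rfl⟩ := Finset.mem_image.1 hf
    exact hd2 i
  rw [Finset.card_image_of_injective _ hdinj, Finset.card_univ, Fintype.card_fin] at this
  omega

end Aux

/-- If `H` (edge set `E`) has `k` edge-disjoint `r→t` paths for every terminal `t ∈ T`,
and is edge-minimal with this property, then for every vertex `v ≠ r`, at most `k`
edge-disjoint `r→v` paths exist in `H`. -/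
theorem kDST_minimal_local_connectivity_le
    {V : Type*} [Fintype V] [DecidableEq V]
    (E : Finset (V × V)) (r : V) (T : Finset V) (k : ℕ)
    (hfeas : ∀ t ∈ T, HasKPaths E r t k)
    (hmin : ∀ e ∈ E, ∃ t ∈ T, ¬ HasKPaths (E.erase e) r t k)
    (v : V) (hv : v ≠ r) (m : ℕ) (hm : HasKPaths E r v m) :
    m ≤ k := kDST_aux E r T k hfeas hmin v hv m hm
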